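/- Let E be a real normed vector space, let L ≥ 0 and α ≥ 0 with α·L < 1, let k ≥ 1, and let g₁, …, g_{k-1} : E → E each satisfy ‖gᵢ(W₁) - gᵢ(W₂)‖ ≤ L·‖W₁ - W₂‖ for all W₁, W₂ ∈ E. Suppose (Wᵢ)_{i=1}^{k} and (Vᵢ)_{i=1}^{k} are sequences in E with W_{i+1} = Wᵢ - α·gᵢ(Wᵢ) and V_{i+1} = Vᵢ - α·gᵢ(Vᵢ) for every 1 ≤ i ≤ k-1, and that W_k = V_k. Then Wᵢ = Vᵢ for every 1 ≤ i ≤ k; in particular W₁ = V₁. -/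
import Mathlib


/-- Reversibility of an SGD trajectory: with step size `α < 1/L` and each
`gᵢ` being `L`-Lipschitz, the whole model sequence is determined by the final
model and the batch gradients. -/
theorem sgd_trajectory_reversible {E : Type*} [NormedAddCommGroup E] [NormedSpace ℝ E]
    (L α : ℝ) (hL : 0 ≤ L) (hα : 0 ≤ α) (hαL : α * L < 1)
    (k : ℕ) (hk : 1 ≤ k) (g : ℕ → E → E)
    (hg : ∀ i, 1 ≤ i → i ≤ k - 1 → ∀ W₁ W₂ : E, ‖g i W₁ - g i W₂‖ ≤ L * ‖W₁ - W₂‖)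
    (W V : ℕ → E)
    (hW : ∀ i, 1 ≤ i → i ≤ k - 1 → W (i + 1) = W i - α • g i (W i))
    (hV : ∀ i, 1 ≤ i → i ≤ k - 1 → V (i + 1) = V i - α • g i (V i))
    (hend : W k = V k) :
    ∀ i, 1 ≤ i → i ≤ k → W i = V i := by
  have key : ∀ d : ℕ, ∀ i, 1 ≤ i → i + d = k → W i = V i := by
    intro d
    induction d with
    | zero =>
      intro i hi hik
      have hik2 : i = k := by omega
      subst hik2
      exact hend
    | succ d ih =>
      intro i hi hik
      have hik1 : i ≤ k - 1 := by omega
      have hnext : W (i + 1) = V (i + 1) := ih (i + 1) (by omega) (by omega)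
      rw [hW i hi hik1, hV i hi hik1] at hnext
      have hsub : W i - V i = α • (g i (W i) - g i (V i)) := by
        rw [smul_sub]; abel_nf; abel_nf at hnext; linear_combination (norm := abel1) hnext
      have hnorm : ‖W i - V i‖ ≤ α * L * ‖W i - V i‖ := by
        calc ‖W i - V i‖ = α * ‖g i (W i) - g i (V i)‖ := by
              rw [hsub, norm_smul, Real.norm_of_nonneg hα]
          _ ≤ α * (L * ‖W i - V i‖) := by
              exact mul_le_mul_of_nonneg_left (hg i hi hik1 (W i) (V i)) hα
          _ = α * L * ‖W i - V i‖ := by ring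
      have : ‖W i - V i‖ ≤ 0 := by nlinarith [norm_nonneg (W i - V i)]
      have : W i - V i = 0 := norm_le_zero_iff.mp this
      exact sub_eq_zero.mp this
  intro i hi hik
  exact key (k - i) i hi (by omega)
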